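/- arXiv:2405.04343 — 4 statements merged into one kernel-verified Lean document; each statement's English description precedes it below -/
import Mathlib

section
/- Let G be a group, K ⊆ G a finite subset, and δ > 0. Then there exists ε > 0 such that whenever F ⊆ G is a finite nonempty subset that is (K,ε)-invariant (i.e. |K·F △ F| < ε|F|), every subset F' ⊆ F with |F'| ≥ (1-ε)|F| is (K,δ)-invariant (i.e. |K·F' △ F'| < δ|F'|). -/
open scoped Pointwise

/-- Lemma 2.2: for a finite `K ⊆ G` and `δ > 0`, there is `ε > 0` such that any
sufficiently large subset of a `(K,ε)`-invariant finite set is `(K,δ)`-invariant. -/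
theorem stmt0 (G : Type*) [Group G] [DecidableEq G] (K : Finset G) (δ : ℝ) (hδ : 0 < δ) :
    ∃ ε > (0 : ℝ), ∀ F : Finset G, F.Nonempty →
      ((symmDiff (K * F) F).card : ℝ) < ε * F.card →
      ∀ F' ⊆ F, (1 - ε) * F.card ≤ (F'.card : ℝ) →
        ((symmDiff (K * F') F').card : ℝ) < δ * F'.card := by
  set ε : ℝ := min (1/2) (δ / (4 * (K.card + 2))) with hε
  have hKpos : (0:ℝ) < 4 * (K.card + 2) := by positivity
  have hεpos : 0 < ε := by
    apply lt_min (by norm_num)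
    positivity
  refine ⟨ε, hεpos, ?_⟩
  intro F hF hFinv F' hF'F hF'big
  have hnpos : (0:ℝ) < F.card := by
    exact_mod_cast Finset.card_pos.mpr hF
  have hε2 : ε ≤ 1/2 := min_le_left _ _
  have hεδ : ε ≤ δ / (4 * (K.card + 2)) := min_le_right _ _
  -- containment
  have hsub : symmDiff (K * F') F' ⊆ symmDiff (K * F) F ∪ K * (F \ F') ∪ (F \ F') := by
    intro x hx
    rw [Finset.mem_symmDiff] at hx
    simp only [Finset.mem_union, Finset.mem_symmDiff, Finset.mem_sdiff]
    rcases hx with ⟨hx1, hx2⟩ | ⟨hx1, hx2⟩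
    · -- x ∈ K*F', x ∉ F'
      by_cases hxF : x ∈ F
      · right; exact ⟨hxF, hx2⟩
      · left; left; left
        refine ⟨?_, hxF⟩
        exact Finset.mul_subset_mul_left hF'F hx1
    · -- x ∈ F', x ∉ K*F'
      by_cases hxKF : x ∈ K * F
      · -- x = k*f, f ∈ F; f ∉ F' since x ∉ K*F'
        rw [Finset.mem_mul] at hxKF
        obtain ⟨k, hk, f, hf, hkf⟩ := hxKF
        left; right
        rw [Finset.mem_mul]
        refine ⟨k, hk, f, ?_, hkf⟩
        rw [Finset.mem_sdiff]
        refine ⟨hf, fun hfF' => hx2 ?_⟩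
        rw [Finset.mem_mul]
        exact ⟨k, hk, f, hfF', hkf⟩
      · left; left; right
        exact ⟨hF'F hx1, hxKF⟩
  have hcard : ((symmDiff (K * F') F').card : ℝ) ≤
      ((symmDiff (K * F) F).card : ℝ) + (K * (F \ F')).card + (F \ F').card := by
    have h0 := Finset.card_le_card hsub
    have h1 := Finset.card_union_le (symmDiff (K * F) F ∪ K * (F \ F')) (F \ F')
    have h2 := Finset.card_union_le (symmDiff (K * F) F) (K * (F \ F'))
    have : (symmDiff (K * F') F').card ≤
        (symmDiff (K * F) F).card + (K * (F \ F')).card + (F \ F').card := by omega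
    exact_mod_cast this
  have hmul : ((K * (F \ F')).card : ℝ) ≤ (K.card : ℝ) * (F \ F').card := by
    exact_mod_cast Finset.card_mul_le
  have hsd : ((F \ F').card : ℝ) = (F.card : ℝ) - F'.card := by
    rw [Finset.card_sdiff_of_subset hF'F]
    have := Finset.card_le_card hF'F
    push_cast [Nat.cast_sub this]
    ring
  have hsd_le : ((F \ F').card : ℝ) ≤ ε * F.card := by
    rw [hsd]; nlinarith
  have hm : (F'.card : ℝ) ≥ (1/2) * F.card := by nlinarith
  have hKnn : (0:ℝ) ≤ (K.card : ℝ) := by positivity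
  have key : ((symmDiff (K * F') F').card : ℝ) < ((K.card : ℝ) + 2) * ε * F.card := by
    calc ((symmDiff (K * F') F').card : ℝ)
        ≤ ((symmDiff (K * F) F).card : ℝ) + (K.card : ℝ) * (F \ F').card + (F \ F').card := by
          linarith
      _ < ε * F.card + (K.card : ℝ) * (ε * F.card) + ε * F.card := by
          have : (K.card : ℝ) * (F \ F').card ≤ (K.card : ℝ) * (ε * F.card) :=
            mul_le_mul_of_nonneg_left hsd_le hKnn
          linarith
      _ = ((K.card : ℝ) + 2) * ε * F.card := by ring
  have hstep : ((K.card : ℝ) + 2) * ε ≤ δ / 4 := by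
    rw [le_div_iff₀ hKpos] at hεδ
    nlinarith
  calc ((symmDiff (K * F') F').card : ℝ)
      < ((K.card : ℝ) + 2) * ε * F.card := key
    _ ≤ (δ / 4) * F.card := by nlinarith
    _ < (δ / 2) * F.card := by nlinarith
    _ ≤ δ * F'.card := by nlinarith
end

section
/- Let Λ be a group, Λ₀ ⊆ Λ a finite symmetric subset, n a positive natural number, Y a finite set with an action of Λ, and Y₀ ⊆ Y. Then there exists a function f : Y → [0,1] such that: (1) f(y) = 0 for all y ∈ Y₀; (2) |f(λ·y) − f(y)| ≤ 1/n for all y ∈ Y and λ ∈ Λ₀; and (3) the number of y ∈ Y with f(y) ≠ 1 is at most (1 + |Λ₀| + |Λ₀|² + ... + |Λ₀|^{n−1})·|Y₀|. -/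
open scoped Classical

/-- The "wedding cake" lemma: given a finite symmetric `Λ₀ ⊆ Λ` acting on a finite set `Y`
and `Y₀ ⊆ Y`, there is `f : Y → [0,1]` vanishing on `Y₀`, `Λ₀`-Lipschitz with constant `1/n`,
and equal to `1` outside a set of size at most `(1 + |Λ₀| + ⋯ + |Λ₀|^{n-1})·|Y₀|`. -/
theorem stmt1 (Λ : Type*) [Group Λ] (Λ₀ : Finset Λ)
    (hsym : ∀ l ∈ Λ₀, l⁻¹ ∈ Λ₀) (n : ℕ) (hn : 0 < n)
    (Y : Type*) [Fintype Y] [MulAction Λ Y] (Y₀ : Finset Y) :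
    ∃ f : Y → ℝ, (∀ y, f y ∈ Set.Icc (0 : ℝ) 1) ∧
      (∀ y ∈ Y₀, f y = 0) ∧
      (∀ y : Y, ∀ l ∈ Λ₀, |f (l • y) - f y| ≤ 1 / n) ∧
      ((Finset.univ.filter fun y : Y => f y ≠ 1).card : ℝ) ≤
        (∑ i ∈ Finset.range n, (Λ₀.card : ℝ) ^ i) * Y₀.card := by
  classical
  -- frontier sets
  let T : ℕ → Finset Y := fun k =>
    Nat.rec Y₀ (fun _ Tk => (Λ₀ ×ˢ Tk).image (fun p : Λ × Y => p.1 • p.2)) k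
  have hT0 : T 0 = Y₀ := rfl
  have hTsucc : ∀ k, T (k + 1) = (Λ₀ ×ˢ T k).image (fun p : Λ × Y => p.1 • p.2) :=
    fun k => rfl
  have hTcard : ∀ k, (T k).card ≤ Λ₀.card ^ k * Y₀.card := by
    intro k
    induction k with
    | zero => simp [hT0]
    | succ k ih =>
      calc (T (k + 1)).card ≤ (Λ₀ ×ˢ T k).card := by
            rw [hTsucc]; exact Finset.card_image_le
        _ = Λ₀.card * (T k).card := Finset.card_product _ _
        _ ≤ Λ₀.card * (Λ₀.card ^ k * Y₀.card) := Nat.mul_le_mul_left _ ih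
        _ = Λ₀.card ^ (k + 1) * Y₀.card := by ring
  -- balls
  let S : ℕ → Finset Y := fun k => (Finset.range (k + 1)).biUnion T
  have hSmono : ∀ j k, j ≤ k → S j ⊆ S k := by
    intro j k h
    exact Finset.biUnion_subset_biUnion_of_subset_left _
      (Finset.range_subset_range.2 (by omega))
  have hY₀S : ∀ y ∈ Y₀, y ∈ S 0 := by
    intro y hy
    exact Finset.mem_biUnion.2 ⟨0, Finset.mem_range.2 Nat.one_pos, hy⟩
  have hstep : ∀ k, ∀ y ∈ S k, ∀ l ∈ Λ₀, l • y ∈ S (k + 1) := by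
    intro k y hy l hl
    obtain ⟨i, hi, hyi⟩ := Finset.mem_biUnion.1 hy
    have hi' := Finset.mem_range.1 hi
    refine Finset.mem_biUnion.2 ⟨i + 1, ?_, ?_⟩
    · exact Finset.mem_range.2 (by omega)
    · rw [hTsucc]
      exact Finset.mem_image.2 ⟨(l, y), Finset.mem_product.2 ⟨hl, hyi⟩, rfl⟩
  -- distance function
  let d : Y → ℕ := fun y => sInf {k | y ∈ S k ∨ k = n}
  have hne : ∀ y : Y, ({k | y ∈ S k ∨ k = n} : Set ℕ).Nonempty :=
    fun y => ⟨n, Or.inr rfl⟩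
  have hdn : ∀ y, d y ≤ n := fun y => Nat.sInf_le (Or.inr rfl)
  have hdle : ∀ y k, y ∈ S k → d y ≤ k := fun y k h => Nat.sInf_le (Or.inl h)
  have hdmem : ∀ y, d y < n → y ∈ S (d y) := by
    intro y h
    rcases Nat.sInf_mem (hne y) with h' | h'
    · exact h'
    · exact absurd h' h.ne
  have hdstep : ∀ (y : Y), ∀ l ∈ Λ₀, d (l • y) ≤ d y + 1 := by
    intro y l hl
    rcases lt_or_ge (d y) n with h | h
    · exact hdle _ _ (hstep _ _ (hdmem y h) l hl)
    · have := hdn (l • y); omega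
  -- the function
  refine ⟨fun y => (d y : ℝ) / n, ?_, ?_, ?_, ?_⟩
  · intro y
    constructor
    · positivity
    · rw [div_le_one (by positivity)]
      exact_mod_cast hdn y
  · intro y hy
    have : d y = 0 := Nat.le_zero.1 (hdle y 0 (hY₀S y hy))
    simp [this]
  · intro y l hl
    have h1 : d (l • y) ≤ d y + 1 := hdstep y l hl
    have h2 : d y ≤ d (l • y) + 1 := by
      have := hdstep (l • y) l⁻¹ (hsym l hl)
      rwa [inv_smul_smul] at this
    have h1' : (d (l • y) : ℝ) ≤ (d y : ℝ) + 1 := by exact_mod_cast h1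
    have h2' : (d y : ℝ) ≤ (d (l • y) : ℝ) + 1 := by exact_mod_cast h2
    have hn' : (0 : ℝ) < (n : ℕ) := by exact_mod_cast hn
    rw [div_sub_div_same, abs_div, abs_of_nonneg (le_of_lt hn')]
    rw [div_le_div_iff_of_pos_right hn']
    rw [abs_sub_le_iff]
    constructor <;> linarith
  · -- counting
    have hsub : (Finset.univ.filter fun y : Y => ((d y : ℝ) / n) ≠ 1) ⊆ S (n - 1) := by
      intro y hy
      have hne1 : ((d y : ℝ) / n) ≠ 1 := (Finset.mem_filter.1 hy).2
      have hdlt : d y < n := by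
        rcases lt_or_eq_of_le (hdn y) with h | h
        · exact h
        · exfalso; apply hne1
          rw [h, div_self (by exact_mod_cast hn.ne' : (n : ℝ) ≠ 0)]
      exact hSmono (d y) (n - 1) (Nat.le_pred_of_lt hdlt) (hdmem y hdlt)
    have hcard : (S (n - 1)).card ≤ ∑ i ∈ Finset.range n, Λ₀.card ^ i * Y₀.card := by
      have : S (n - 1) = (Finset.range n).biUnion T := by
        have he : n - 1 + 1 = n := Nat.succ_pred_eq_of_pos hn
        simp only [S, he]
      rw [this]
      calc ((Finset.range n).biUnion T).card ≤ ∑ i ∈ Finset.range n, (T i).card :=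
            Finset.card_biUnion_le
        _ ≤ ∑ i ∈ Finset.range n, Λ₀.card ^ i * Y₀.card :=
            Finset.sum_le_sum fun i _ => hTcard i
    calc ((Finset.univ.filter fun y : Y => ((d y : ℝ) / n) ≠ 1).card : ℝ)
        ≤ ((S (n - 1)).card : ℝ) := by exact_mod_cast Finset.card_le_card hsub
      _ ≤ ((∑ i ∈ Finset.range n, Λ₀.card ^ i * Y₀.card : ℕ) : ℝ) := by
          exact_mod_cast hcard
      _ = (∑ i ∈ Finset.range n, (Λ₀.card : ℝ) ^ i) * Y₀.card := by
          push_cast [Finset.sum_mul]; ring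
end

section
/- Let Λ be a countable amenable group, Λₙ ⊴ Λ a finite-index normal subgroup, K ⊆ Λ finite, and φ : Λ/Λₙ → Λ a section of the quotient map πₙ such that the set F = φ(Λ/Λₙ) is (K, ε/|K|)-invariant, i.e. |KF \ F| < (ε/|K|)|F|. Then the set E = {t ∈ Λ/Λₙ : λφ(t) ≠ φ(πₙ(λ)t) for some λ ∈ K} satisfies |E| < ε·|Λ/Λₙ|. -/
open scoped Pointwise Classical

/-- Weiss-type lemma (necessity direction): if `φ` is a section of the quotient map
`Λ → Λ/Λₙ` whose image `F` is `(K, ε/|K|)`-invariant in the sense that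
`|KF \ F| < (ε/|K|)|F|`, then the set of points where `φ` fails to be `K`-equivariant
has cardinality less than `ε·|Λ/Λₙ|`. -/
theorem stmt3 (Λ : Type*) [Group Λ] [Countable Λ]
    (N : Subgroup Λ) [N.Normal] [Fintype (Λ ⧸ N)]
    (K : Finset Λ) (ε : ℝ) (hε : 0 < ε)
    (φ : Λ ⧸ N → Λ) (hφ : ∀ t, (QuotientGroup.mk (φ t) : Λ ⧸ N) = t)
    (hinv : (((K * Finset.univ.image φ) \ Finset.univ.image φ).card : ℝ)
      < (ε / K.card) * (Finset.univ.image φ).card) :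
    ((Finset.univ.filter fun t : Λ ⧸ N =>
        ∃ l ∈ K, l * φ t ≠ φ ((QuotientGroup.mk l : Λ ⧸ N) * t)).card : ℝ)
      < ε * Fintype.card (Λ ⧸ N) := by
  classical
  set F : Finset Λ := Finset.univ.image φ with hF
  have hφinj : Function.Injective φ := fun a b h => by rw [← hφ a, ← hφ b, h]
  have hFcard : F.card = Fintype.card (Λ ⧸ N) := by
    rw [hF, Finset.card_image_of_injective _ hφinj, Finset.card_univ]
  have hQpos : (0 : ℝ) < Fintype.card (Λ ⧸ N) := by
    exact_mod_cast Fintype.card_pos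
  rcases K.eq_empty_or_nonempty with hK | hK
  · subst hK
    simp only [Finset.notMem_empty, false_and, exists_false, Finset.filter_false,
      Finset.card_empty, Nat.cast_zero]
    positivity
  · have hKpos : (0 : ℝ) < K.card := by exact_mod_cast hK.card_pos
    set E := Finset.univ.filter fun t : Λ ⧸ N =>
      ∃ l ∈ K, l * φ t ≠ φ ((QuotientGroup.mk l : Λ ⧸ N) * t) with hE
    have key : E.card ≤ (K ×ˢ ((K * F) \ F)).card := by
      apply Finset.card_le_card_of_injOn
        (fun t => if h : ∃ l ∈ K, l * φ t ≠ φ ((QuotientGroup.mk l : Λ ⧸ N) * t)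
                  then (h.choose, h.choose * φ t) else (1, 1))
      · intro t ht
        have h := (Finset.mem_filter.mp ht).2
        simp only [dif_pos h]
        obtain ⟨hlK, hlne⟩ := h.choose_spec
        refine Finset.mem_product.mpr ⟨hlK, Finset.mem_sdiff.mpr ⟨?_, ?_⟩⟩
        · exact Finset.mul_mem_mul hlK (Finset.mem_image_of_mem _ (Finset.mem_univ t))
        · intro hmem
          obtain ⟨s, -, hs⟩ := Finset.mem_image.mp hmem
          apply hlne
          have hseq : s = (QuotientGroup.mk h.choose : Λ ⧸ N) * t := by
            rw [← hφ s, show φ s = h.choose * φ t from hs, QuotientGroup.mk_mul, hφ]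
          rw [hseq] at hs
          exact hs.symm
      · intro a ha b hb hab
        have hA := (Finset.mem_filter.mp ha).2
        have hB := (Finset.mem_filter.mp hb).2
        simp only [dif_pos hA, dif_pos hB, Prod.mk.injEq] at hab
        obtain ⟨h1, h2⟩ := hab
        rw [h1] at h2
        exact hφinj (mul_left_cancel h2)
    have key' : (E.card : ℝ) ≤ (K.card : ℝ) * ((K * F) \ F).card := by
      rw [Finset.card_product] at key
      exact_mod_cast key
    calc (E.card : ℝ) ≤ (K.card : ℝ) * ((K * F) \ F).card := key'
      _ < (K.card : ℝ) * ((ε / K.card) * F.card) := by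
          exact mul_lt_mul_of_pos_left hinv hKpos
      _ = ε * F.card := by field_simp
      _ = ε * Fintype.card (Λ ⧸ N) := by rw [hFcard]
end

section
/- Let G be a countable amenable group acting on a compact metrizable space X, and suppose the action is almost finite in measure. Then the action is essentially free: for every g ∈ G \ {1} and every G-invariant Borel probability measure μ on X, μ({x ∈ X : g·x = x}) = 0. -/
open scoped Pointwise Classical
open MeasureTheory
open scoped ENNReal NNReal

/-- A castle: the levels `s • V i`, for `s ∈ S i` and all `i`, are pairwise disjoint. -/
def IsCastle (G X : Type*) [Group G] [MulAction G X] {I : Type*}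
    (S : I → Finset G) (V : I → Set X) : Prop :=
  ∀ i j : I, ∀ s ∈ S i, ∀ t ∈ S j, (i ≠ j ∨ s ≠ t) → Disjoint (s • V i) (t • V j)

/-- `S` is `(K,δ)`-invariant: `|K·S △ S| < δ|S|`. -/
def FolnerInvariant (G : Type*) [Group G] (K : Finset G) (δ : ℝ) (S : Finset G) : Prop :=
  ((symmDiff (K * S) S).card : ℝ) < δ * S.card

/-- An action of a countable group on a compact metric space is almost finite in measure:
for every finite `K ⊆ G` and `δ, ε > 0` there is an open castle with `(K,δ)`-invariant
shapes, levels of diameter at most `δ`, and footprint of lower Banach density at least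
`1 - ε` (equivalently, of measure at least `1 - ε` with respect to every invariant Borel
probability measure). -/
def AlmostFiniteInMeasure (G X : Type*) [Group G] [MulAction G X]
    [MetricSpace X] [MeasurableSpace X] : Prop :=
  ∀ (K : Finset G) (δ ε : ℝ), 0 < δ → 0 < ε →
    ∃ (I : Type) (_ : Fintype I) (S : I → Finset G) (V : I → Set X),
      IsCastle G X S V ∧ (∀ i, IsOpen (V i)) ∧ (∀ i, (S i).Nonempty) ∧
      (∀ i, ∀ s ∈ S i, Metric.diam (s • V i) ≤ δ) ∧
      (∀ i, FolnerInvariant G K δ (S i)) ∧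
      (∀ μ : Measure X, IsProbabilityMeasure μ →
        (∀ (g : G) (s : Set X), μ ((g • ·) ⁻¹' s) = μ s) →
        ENNReal.ofReal (1 - ε) ≤ μ (⋃ i, ⋃ s ∈ (S i : Set G), s • V i))

/-- If an action of a countable amenable group on a compact metrizable space is almost
finite in measure, then it is essentially free: every nontrivial group element fixes a
null set with respect to every invariant Borel probability measure. -/
theorem stmt5 {G X : Type*} [Group G] [Countable G]
    [MetricSpace X] [CompactSpace X] [MeasurableSpace X] [BorelSpace X]
    [MulAction G X] (hcont : ∀ g : G, Continuous fun x : X => g • x)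
    (haf : AlmostFiniteInMeasure G X)
    (g : G) (hg : g ≠ 1) (μ : Measure X) [IsProbabilityMeasure μ]
    (hμ : ∀ (h : G) (s : Set X), μ ((h • ·) ⁻¹' s) = μ s) :
    μ {x : X | g • x = x} = 0 := by
  set F := {x : X | g • x = x} with hFdef
  have main : ∀ δ ε : ℝ, 0 < δ → 0 < ε →
      μ F ≤ ENNReal.ofReal δ + ENNReal.ofReal ε := by
    intro δ ε hδ hε
    obtain ⟨I, hI, S, V, hcastle, hVopen, hSne, hdiam, hfol, hmeasU⟩ := haf {g} δ ε hδ hε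
    have hlevel_eq : ∀ (s : G) (W : Set X), s • W = (s⁻¹ • ·) ⁻¹' W := by
      intro s W
      ext x
      simp [Set.mem_smul_set_iff_inv_smul_mem]
    have hlevel_open : ∀ (s : G) i, IsOpen (s • V i) := by
      intro s i
      rw [hlevel_eq]
      exact (hVopen i).preimage (hcont s⁻¹)
    have hμlevel : ∀ (s : G) i, μ (s • V i) = μ (V i) := by
      intro s i; rw [hlevel_eq]; exact hμ s⁻¹ (V i)
    set U := ⋃ i, ⋃ s ∈ (S i : Set G), s • V i with hUdef
    have hUopen : IsOpen U := isOpen_iUnion fun i => isOpen_biUnion fun s _ => hlevel_open s i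
    have hμU : ENNReal.ofReal (1 - ε) ≤ μ U := hmeasU μ inferInstance hμ
    -- total mass of the castle is at most 1
    set T : Finset ((_ : I) × G) := Finset.univ.sigma S with hTdef
    have hTdisj : Set.PairwiseDisjoint (T : Set ((_ : I) × G)) (fun p => p.2 • V p.1) := by
      intro p hp q hq hpq
      rw [Finset.mem_coe, hTdef, Finset.mem_sigma] at hp hq
      refine hcastle p.1 q.1 p.2 hp.2 q.2 hq.2 ?_
      by_contra hcon
      push_neg at hcon
      exact hpq (Sigma.ext hcon.1 (heq_of_eq hcon.2))
    have hsum_le_one : ∑ i : I, ((S i).card : ℝ≥0∞) * μ (V i) ≤ 1 := by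
      have h1 : ∑ p ∈ T, μ (p.2 • V p.1) = μ (⋃ p ∈ T, p.2 • V p.1) :=
        (measure_biUnion_finset hTdisj fun p _ => (hlevel_open p.2 p.1).measurableSet).symm
      have h2 : ∑ p ∈ T, μ (p.2 • V p.1) = ∑ i : I, ((S i).card : ℝ≥0∞) * μ (V i) := by
        rw [hTdef, Finset.sum_sigma]
        refine Finset.sum_congr rfl fun i _ => ?_
        rw [Finset.sum_congr rfl fun s _ => hμlevel s i, Finset.sum_const, nsmul_eq_mul]
      calc ∑ i : I, ((S i).card : ℝ≥0∞) * μ (V i) = μ (⋃ p ∈ T, p.2 • V p.1) := by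
            rw [← h2, h1]
        _ ≤ 1 := prob_le_one
    -- bad part of each shape
    set B : I → Finset G := fun i => (S i).filter (fun s => g * s ∉ S i) with hBdef
    have hBcard : ∀ i, ((B i).card : ℝ≥0∞) ≤ ENNReal.ofReal δ * (S i).card := by
      intro i
      have himg : (B i).image (fun s => g * s) ⊆ symmDiff (({g} : Finset G) * S i) (S i) := by
        intro a ha
        rw [Finset.mem_image] at ha
        obtain ⟨s, hs, rfl⟩ := ha
        rw [hBdef, Finset.mem_filter] at hs
        rw [Finset.mem_symmDiff]
        exact Or.inl ⟨Finset.mul_mem_mul (Finset.mem_singleton_self g) hs.1, hs.2⟩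
      have hcard1 : (B i).card ≤ (symmDiff (({g} : Finset G) * S i) (S i)).card := by
        rw [← Finset.card_image_of_injective (B i) (mul_right_injective g)]
        exact Finset.card_le_card himg
      have hfoli := hfol i
      rw [FolnerInvariant] at hfoli
      have hreal : ((B i).card : ℝ) ≤ δ * (S i).card := by
        calc ((B i).card : ℝ) ≤ ((symmDiff (({g} : Finset G) * S i) (S i)).card : ℝ) := by
              exact_mod_cast hcard1
          _ ≤ δ * (S i).card := le_of_lt hfoli
      calc ((B i).card : ℝ≥0∞) = ENNReal.ofReal ((B i).card : ℝ) := by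
            rw [ENNReal.ofReal_natCast]
        _ ≤ ENNReal.ofReal (δ * (S i).card) := ENNReal.ofReal_le_ofReal hreal
        _ = ENNReal.ofReal δ * (S i).card := by
            rw [ENNReal.ofReal_mul hδ.le, ENNReal.ofReal_natCast]
    -- fixed points in the footprint lie in bad levels
    have hsub : F ∩ U ⊆ ⋃ i, ⋃ s ∈ (B i : Set G), s • V i := by
      intro x ⟨hxF, hxU⟩
      rw [hUdef, Set.mem_iUnion] at hxU
      obtain ⟨i, hxU⟩ := hxU
      rw [Set.mem_iUnion₂] at hxU
      obtain ⟨s, hs, hxs⟩ := hxU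
      rw [Finset.mem_coe] at hs
      have hgx : x ∈ (g * s) • V i := by
        obtain ⟨v, hv, hsv⟩ := hxs
        have hxF' : g • x = x := hxF
        have hx' : x = (g * s) • v := by rw [← hxF', ← hsv, smul_smul]
        rw [hx']
        exact Set.smul_mem_smul_set hv
      have hgs : g * s ∉ S i := by
        intro hgs
        have hne : s ≠ g * s := by
          intro h
          exact hg (mul_eq_right.mp h.symm)
        exact Set.disjoint_left.mp (hcastle i i s hs (g * s) hgs (Or.inr hne)) hxs hgx
      rw [Set.mem_iUnion]
      refine ⟨i, ?_⟩
      rw [Set.mem_iUnion₂]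
      exact ⟨s, by rw [Finset.mem_coe, hBdef, Finset.mem_filter]; exact ⟨hs, hgs⟩, hxs⟩
    -- measure of bad levels is small
    have hbad : μ (⋃ i, ⋃ s ∈ (B i : Set G), s • V i) ≤ ENNReal.ofReal δ := by
      calc μ (⋃ i, ⋃ s ∈ (B i : Set G), s • V i)
          ≤ ∑ i : I, μ (⋃ s ∈ (B i : Set G), s • V i) := measure_iUnion_fintype_le _ _
        _ ≤ ∑ i : I, ∑ s ∈ B i, μ (s • V i) := by
            refine Finset.sum_le_sum fun i _ => ?_
            exact measure_biUnion_finset_le (B i) _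
        _ = ∑ i : I, ((B i).card : ℝ≥0∞) * μ (V i) := by
            refine Finset.sum_congr rfl fun i _ => ?_
            rw [Finset.sum_congr rfl fun s _ => hμlevel s i, Finset.sum_const, nsmul_eq_mul]
        _ ≤ ∑ i : I, ENNReal.ofReal δ * (((S i).card : ℝ≥0∞) * μ (V i)) := by
            refine Finset.sum_le_sum fun i _ => ?_
            rw [← mul_assoc]
            exact mul_le_mul_left (hBcard i) _
        _ = ENNReal.ofReal δ * ∑ i : I, ((S i).card : ℝ≥0∞) * μ (V i) := by
            rw [Finset.mul_sum]
        _ ≤ ENNReal.ofReal δ * 1 := mul_le_mul_right hsum_le_one _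
        _ = ENNReal.ofReal δ := mul_one _
    -- complement of footprint is small
    have hcompl : μ Uᶜ ≤ ENNReal.ofReal ε := by
      have h1 : μ Uᶜ = 1 - μ U := prob_compl_eq_one_sub hUopen.measurableSet
      rw [h1, tsub_le_iff_right]
      calc (1 : ℝ≥0∞) = ENNReal.ofReal (ε + (1 - ε)) := by norm_num
        _ ≤ ENNReal.ofReal ε + ENNReal.ofReal (1 - ε) := ENNReal.ofReal_add_le
        _ ≤ ENNReal.ofReal ε + μ U := add_le_add_right hμU _
    calc μ F ≤ μ ((F ∩ U) ∪ Uᶜ) := by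
          refine measure_mono fun x hx => ?_
          by_cases hxU : x ∈ U
          · exact Or.inl ⟨hx, hxU⟩
          · exact Or.inr hxU
      _ ≤ μ (F ∩ U) + μ Uᶜ := measure_union_le _ _
      _ ≤ ENNReal.ofReal δ + ENNReal.ofReal ε :=
          add_le_add (le_trans (measure_mono hsub) hbad) hcompl
  have : μ F ≤ 0 := by
    refine ENNReal.le_of_forall_pos_le_add fun c hc _ => ?_
    have h2 : (0:ℝ) < c / 2 := by positivity
    calc μ F ≤ ENNReal.ofReal (c / 2) + ENNReal.ofReal (c / 2) := main _ _ h2 h2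
      _ = ENNReal.ofReal ((c:ℝ) / 2 + (c:ℝ) / 2) := (ENNReal.ofReal_add h2.le h2.le).symm
      _ = ENNReal.ofReal (c:ℝ) := by rw [add_halves]
      _ = (c : ℝ≥0∞) := ENNReal.ofReal_coe_nnreal
      _ = 0 + c := (zero_add _).symm
  exact le_antisymm this (zero_le)
end
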